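/- For every pure unit quaternion μ, every real number K ≥ 0, and every real number η ∈ [0, 1], there exists a Hermitian positive semidefinite 2×2 complex matrix H such that for all (z₁, z₂) ∈ ℂ², Φ(H·(z₁, z₂)) = K·(Φ(z₁, z₂) − η·μ·Φ(z₁, z₂)·j). -/

import Mathlib

open Quaternion MeasureTheory
open scoped ComplexOrder

noncomputable section

/-- The imaginary unit `i` of the quaternions. -/
def qi : ℍ[ℝ] := ⟨0, 1, 0, 0⟩

/-- The imaginary unit `j` of the quaternions. -/
def qj : ℍ[ℝ] := ⟨0, 0, 1, 0⟩

/-- The embedding `ι : ℂ → ℍ` sending `a + b·√(−1)` to `a + b·j`. -/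
def iotaC (z : ℂ) : ℍ[ℝ] := ⟨z.re, 0, z.im, 0⟩

/-- The identification `Φ : ℂ² → ℍ`, `Φ(z₁, z₂) = ι(z₁) + i·ι(z₂)`. -/
def PhiMap (z : Fin 2 → ℂ) : ℍ[ℝ] := iotaC (z 0) + qi * iotaC (z 1)

/-- A quaternion is a pure unit quaternion if its real part is `0` and its modulus is `1`. -/
def IsPureUnit (μ : ℍ[ℝ]) : Prop := μ.re = 0 ∧ ‖μ‖ = 1

/-- The quaternion exponential. -/
def qexp (q : ℍ[ℝ]) : ℍ[ℝ] := (NormedSpace.expSeries ℝ ℍ[ℝ]).sum q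

/-- The Euclidean inner product on `ℍ ≅ ℝ⁴`: `⟨p, q⟩` is the real part of `p·q̄`. -/
def qinner (p q : ℍ[ℝ]) : ℝ := (p * star q).re

set_option maxHeartbeats 1000000

/-- For every pure unit quaternion `μ`, `K ≥ 0` and `η ∈ [0,1]`, the map
`X ↦ K·(X − η·μ·X·j)` on `ℍ ≅ ℂ²` is realized by a Hermitian positive semidefinite matrix. -/
theorem quaternion_to_hermitian (μ : ℍ[ℝ]) (hμ : IsPureUnit μ) (K : ℝ) (hK : 0 ≤ K)
    (η : ℝ) (hη : η ∈ Set.Icc (0 : ℝ) 1) :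
    ∃ H : Matrix (Fin 2) (Fin 2) ℂ, H.PosSemidef ∧
      ∀ z : Fin 2 → ℂ,
        PhiMap (H.mulVec z) =
          (K : ℍ[ℝ]) * (PhiMap z - (η : ℍ[ℝ]) * (μ * PhiMap z * qj)) := by
  obtain ⟨hre, hnorm⟩ := hμ
  obtain ⟨hη0, hη1⟩ := hη
  set a := μ.imI with ha
  set t := μ.imJ with ht
  set c := μ.imK with hc
  have hunit : a^2 + t^2 + c^2 = 1 := by
    have h1 := Quaternion.normSq_def' μ
    have h2 : Quaternion.normSq μ = ‖μ‖ * ‖μ‖ := Quaternion.normSq_eq_norm_mul_self μ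
    rw [hnorm] at h2; nlinarith
  refine ⟨Matrix.of ![![(K*(1+η*t) : ℂ), K*η*(c + a*Complex.I)],
      ![(K*η*(c - a*Complex.I) : ℂ), K*(1-η*t)]], Matrix.posSemidef_iff_dotProduct_mulVec.2 ⟨?_, ?_⟩, ?_⟩
  · ext i j
    fin_cases i <;> fin_cases j <;>
      simp [Matrix.conjTranspose_apply, Complex.ext_iff]
  · intro x
    rw [Complex.le_def]
    constructor
    · simp only [dotProduct, Matrix.mulVec, Fin.sum_univ_two, Matrix.of_apply,
        Matrix.cons_val', Matrix.cons_val_zero, Matrix.cons_val_one, Matrix.head_cons,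
        Matrix.head_fin_const, Pi.star_apply, RCLike.star_def, Matrix.empty_val',
        Matrix.cons_val_fin_one]
      set p := (x 0).re; set q := (x 0).im; set r := (x 1).re; set s := (x 1).im
      have hS : 0 ≤ (p^2+q^2+r^2+s^2) + t*(p^2+q^2-r^2-s^2)
          + 2*(c*(p*r+q*s) + a*(q*r-p*s)) := by
        have hid : (c*p + a*q + (1-t)*r)^2 + (c*q - a*p + (1-t)*s)^2
            + ((1+t)*p + c*r - a*s)^2 + ((1+t)*q + c*s + a*r)^2
            = 2*((p^2+q^2+r^2+s^2) + t*(p^2+q^2-r^2-s^2)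
              + 2*(c*(p*r+q*s) + a*(q*r-p*s)))
            + (a^2+t^2+c^2-1)*(p^2+q^2+r^2+s^2) := by ring
        rw [hunit] at hid
        nlinarith [sq_nonneg (c*p + a*q + (1-t)*r), sq_nonneg (c*q - a*p + (1-t)*s),
          sq_nonneg ((1+t)*p + c*r - a*s), sq_nonneg ((1+t)*q + c*s + a*r)]
      have key : 0 ≤ (1+η*t)*(p^2+q^2) + (1-η*t)*(r^2+s^2)
          + 2*η*(c*(p*r+q*s) + a*(q*r-p*s)) := by
        nlinarith [mul_nonneg (sub_nonneg.2 hη1) (by positivity : (0:ℝ) ≤ p^2+q^2+r^2+s^2),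
          mul_nonneg hη0 hS]
      have expand : ((starRingEnd ℂ) (x 0) * ((K*(1+η*t) : ℂ) * x 0 + (K*η*(c + a*Complex.I)) * x 1)
          + (starRingEnd ℂ) (x 1) * ((K*η*(c - a*Complex.I)) * x 0 + (K*(1-η*t) : ℂ) * x 1)).re
          = K * ((1+η*t)*(p^2+q^2) + (1-η*t)*(r^2+s^2)
          + 2*η*(c*(p*r+q*s) + a*(q*r-p*s))) := by
        simp [Complex.ext_iff, Complex.add_re, Complex.mul_re, Complex.mul_im]
        ring
      rw [expand]
      simpa using mul_nonneg hK key
    · simp only [dotProduct, Matrix.mulVec, Fin.sum_univ_two, Matrix.of_apply,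
        Matrix.cons_val', Matrix.cons_val_zero, Matrix.cons_val_one, Matrix.head_cons,
        Matrix.head_fin_const, Pi.star_apply, RCLike.star_def, Matrix.empty_val',
        Matrix.cons_val_fin_one, Complex.add_im, Complex.mul_im, Complex.mul_re]
      simp
      ring
  · intro z
    have hq : μ = ⟨0, a, t, c⟩ := by
      ext <;> simp [hre, ha, ht, hc]
    rw [hq]
    have hmv : ∀ i, (Matrix.of ![![(K*(1+η*t) : ℂ), K*η*(c + a*Complex.I)],
        ![(K*η*(c - a*Complex.I) : ℂ), K*(1-η*t)]]).mulVec z i =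
        ![(K*(1+η*t) : ℂ) * z 0 + (K*η*(c + a*Complex.I)) * z 1,
          (K*η*(c - a*Complex.I)) * z 0 + (K*(1-η*t) : ℂ) * z 1] i := by
      intro i; fin_cases i <;>
        simp [Matrix.mulVec, dotProduct, Fin.sum_univ_two]
    simp only [PhiMap, funext hmv]
    ext <;>
      simp only [Quaternion.re_mul, Quaternion.imI_mul, Quaternion.imJ_mul,
        Quaternion.imK_mul, Quaternion.re_add, Quaternion.imI_add, Quaternion.imJ_add,
        Quaternion.imK_add, Quaternion.re_sub, Quaternion.imI_sub, Quaternion.imJ_sub,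
        Quaternion.imK_sub, Quaternion.re_coe, Quaternion.imI_coe, Quaternion.imJ_coe,
        Quaternion.imK_coe, ← hq] <;>
      simp only [hq, iotaC, qi, qj, Quaternion.re_mul, Quaternion.imI_mul, Quaternion.imJ_mul,
        Quaternion.imK_mul, Quaternion.re_add, Quaternion.imI_add, Quaternion.imJ_add,
        Quaternion.imK_add, Quaternion.re_sub, Quaternion.imI_sub, Quaternion.imJ_sub,
        Quaternion.imK_sub, Quaternion.re_coe, Quaternion.imI_coe, Quaternion.imJ_coe,
        Quaternion.imK_coe, Matrix.cons_val_zero, Matrix.cons_val_one, Matrix.head_cons,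
        Complex.add_re, Complex.add_im, Complex.mul_re, Complex.mul_im, Complex.ofReal_re,
        Complex.ofReal_im, Complex.I_re, Complex.I_im, Complex.one_re, Complex.one_im,
        Complex.sub_re, Complex.sub_im] <;>
      ring
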